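/- arXiv:2303.05281 — 2 statements merged into one kernel-verified Lean document; each statement's English description precedes it below -/
import Mathlib

section
/- There is no factorization of Δ² in B₃ into exactly two factors, each of which is conjugate to σ₁^n for some positive integer n; equivalently, Δ² is not a product g₁g₂ of two powers of positive half-twists. -/
/-- The braid relation σ₁σ₂σ₁ = σ₂σ₁σ₂ as a relator in the free group on two generators. -/
def braidRel : Set (FreeGroup (Fin 2)) :=
  {FreeGroup.of 0 * FreeGroup.of 1 * FreeGroup.of 0 *
    (FreeGroup.of 1 * FreeGroup.of 0 * FreeGroup.of 1)⁻¹}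

/-- The braid group B₃ = ⟨σ₁, σ₂ | σ₁σ₂σ₁ = σ₂σ₁σ₂⟩. -/
abbrev B3 : Type := PresentedGroup braidRel

/-- The first Artin generator of B₃. -/
def σ₁ : B3 := PresentedGroup.of 0

/-- The second Artin generator of B₃. -/
def σ₂ : B3 := PresentedGroup.of 1

/-- The Garside element Δ = σ₁σ₂σ₁ of B₃. -/
def Δ : B3 := σ₁ * σ₂ * σ₁

namespace NoTwoFactor

abbrev M := Matrix (Fin 2) (Fin 2) ℤ
abbrev G := Mˣ

def U (a : ℤ) : M := !![1, a; 0, 1]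

lemma U_mul (a b : ℤ) : U a * U b = U (a + b) := by
  simp [U, Matrix.mul_fin_two, add_comm]

lemma U_zero : U 0 = 1 := by
  simp [U, Matrix.one_fin_two]

def uU (a : ℤ) : G :=
  ⟨U a, U (-a), by rw [U_mul]; simp [U_zero], by rw [U_mul]; simp [U_zero]⟩

lemma uU_pow (a : ℤ) (n : ℕ) : (uU a) ^ n = uU (n * a) := by
  induction n with
  | zero =>
    rw [pow_zero]
    refine Units.ext ?_
    show (1 : M) = U ((0 : ℕ) * a)
    norm_num [U_zero]
  | succ k ih =>
    rw [pow_succ, ih]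
    refine Units.ext ?_
    show U (k * a) * U a = U ((k + 1 : ℕ) * a)
    rw [U_mul]; congr 1; push_cast; ring

lemma uU_inv (a : ℤ) : (uU a)⁻¹ = uU (-a) := Units.ext rfl

def u2 : G :=
  ⟨!![1, 0; -1, 1], !![1, 0; 1, 1], by simp [Matrix.mul_fin_two, Matrix.one_fin_two],
    by simp [Matrix.mul_fin_two, Matrix.one_fin_two]⟩

lemma braid_holds : uU 1 * u2 * uU 1 = u2 * uU 1 * u2 := by
  refine Units.ext ?_
  show U 1 * u2.val * U 1 = u2.val * U 1 * u2.val
  simp [U, u2, Matrix.mul_fin_two]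

def f : Fin 2 → G := fun i => if i = 0 then uU 1 else u2

lemma f_rel : ∀ r ∈ braidRel, FreeGroup.lift f r = 1 := by
  intro r hr
  rw [braidRel, Set.mem_singleton_iff] at hr
  subst hr
  simp only [map_mul, map_inv, FreeGroup.lift_apply_of, f]
  norm_num
  rw [braid_holds]
  group

def ρ : B3 →* G := PresentedGroup.toGroup f_rel

lemma ρ_σ₁ : ρ σ₁ = uU 1 := by
  simp [ρ, σ₁, PresentedGroup.toGroup.of, f]

lemma ρ_σ₂ : ρ σ₂ = u2 := by
  simp [ρ, σ₂, PresentedGroup.toGroup.of, f]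

lemma neg_one_fin_two : (-1 : M) = !![-1, 0; 0, -1] := by
  ext i j; fin_cases i <;> fin_cases j <;> simp

lemma ρ_Δsq : (ρ (Δ ^ 2)).val = -1 := by
  have h : ρ (Δ ^ 2) = (uU 1 * u2 * uU 1) ^ 2 := by
    rw [map_pow, Δ, map_mul, map_mul, ρ_σ₁, ρ_σ₂]
  rw [h, sq]
  show (U 1 * u2.val * U 1) * (U 1 * u2.val * U 1) = -1
  rw [neg_one_fin_two]
  simp [U, u2, Matrix.mul_fin_two]

lemma trace_of_isConj {a b : G} (h : IsConj a b) :
    Matrix.trace a.val = Matrix.trace b.val := by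
  obtain ⟨c, hc⟩ := isConj_iff.mp h
  rw [← hc]
  show _ = Matrix.trace (c.val * a.val * (c⁻¹).val)
  rw [Matrix.trace_mul_cycle]
  have h1 : (c⁻¹).val * c.val = 1 := c.inv_mul
  rw [h1, one_mul]

lemma trace_uU (a : ℤ) : Matrix.trace (uU a).val = 2 := by
  simp [uU, U, Matrix.trace_fin_two]

theorem no_two_factor_factorization' :
    ¬ ∃ g₁ g₂ : B3, (∃ n : ℕ, 1 ≤ n ∧ IsConj (σ₁ ^ n) g₁) ∧
      (∃ n : ℕ, 1 ≤ n ∧ IsConj (σ₁ ^ n) g₂) ∧ g₁ * g₂ = Δ ^ 2 := by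
  rintro ⟨g₁, g₂, ⟨n, -, h₁⟩, ⟨m, -, h₂⟩, hprod⟩
  have h₁' : IsConj (ρ (σ₁ ^ n)) (ρ g₁) := ρ.map_isConj h₁
  have h₂' : IsConj (ρ (σ₁ ^ m)) (ρ g₂) := ρ.map_isConj h₂
  rw [map_pow, ρ_σ₁, uU_pow] at h₁' h₂'
  have t₂ : Matrix.trace (ρ g₂).val = 2 := by
    rw [← trace_of_isConj h₂', trace_uU]
  have t₁ : Matrix.trace ((ρ g₁)⁻¹).val = 2 := by
    have hinv : IsConj (uU (n * 1))⁻¹ (ρ g₁)⁻¹ := by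
      obtain ⟨c, hc⟩ := isConj_iff.mp h₁'
      exact isConj_iff.mpr ⟨c, by rw [← hc]; group⟩
    rw [uU_inv] at hinv
    rw [← trace_of_isConj hinv, trace_uU]
  have key : ρ g₂ = (ρ g₁)⁻¹ * ρ (Δ ^ 2) := by
    have : ρ g₁ * ρ g₂ = ρ (Δ ^ 2) := by rw [← map_mul, hprod]
    rw [← this]; group
  have t₂' : Matrix.trace (ρ g₂).val = -2 := by
    rw [key]
    show Matrix.trace (((ρ g₁)⁻¹).val * (ρ (Δ ^ 2)).val) = -2
    rw [ρ_Δsq, mul_neg_one, Matrix.trace_neg, t₁]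
  omega

end NoTwoFactor

theorem no_two_factor_factorization :
    ¬ ∃ g₁ g₂ : B3, (∃ n : ℕ, 1 ≤ n ∧ IsConj (σ₁ ^ n) g₁) ∧
      (∃ n : ℕ, 1 ≤ n ∧ IsConj (σ₁ ^ n) g₂) ∧ g₁ * g₂ = Δ ^ 2 :=
  NoTwoFactor.no_two_factor_factorization'
end

section
/- If (g₁, …, g_k) is a factorization of the identity in SL₂(ℤ) in which every factor g_j is conjugate to S = [[1,1],[0,1]], then k is divisible by 12. -/
/-- The matrix S = [[1,1],[0,1]] as an element of SL₂(ℤ). -/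
def S : Matrix.SpecialLinearGroup (Fin 2) ℤ :=
  ⟨!![1, 1; 0, 1], by norm_num [Matrix.det_fin_two_of]⟩

/-- The matrix T = [[1,0],[-1,1]] as an element of SL₂(ℤ). -/
def T : Matrix.SpecialLinearGroup (Fin 2) ℤ :=
  ⟨!![1, 0; -1, 1], by norm_num [Matrix.det_fin_two_of]⟩

/-- Lookup table for the abelianization map SL₂(ℤ/4) → ℤ/4. -/
def tab4 : Fin 4 → Fin 4 → Fin 4 → Fin 4 → ZMod 4 := ![![![![0, 0, 0, 0], ![0, 0, 0, 0], ![0, 0, 0, 0], ![0, 0, 0, 0]], ![![0, 0, 0, 0], ![0, 0, 0, 0], ![0, 0, 0, 0], ![3, 2, 1, 0]], ![![0, 0, 0, 0], ![0, 0, 0, 0], ![0, 0, 0, 0], ![0, 0, 0, 0]], ![![0, 0, 0, 0], ![1, 2, 3, 0], ![0, 0, 0, 0], ![0, 0, 0, 0]]], ![![![0, 0, 0, 0], ![0, 3, 0, 0], ![0, 2, 0, 0], ![0, 1, 0, 0]], ![![0, 1, 0, 0], ![0, 0, 0, 0], ![0, 0, 0, 3], ![2, 0, 0, 0]], ![![0,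 2, 0, 0], ![0, 0, 0, 1], ![0, 0, 0, 0], ![0, 0, 0, 3]], ![![0, 3, 0, 0], ![2, 0, 0, 0], ![0, 0, 0, 1], ![0, 0, 0, 0]]], ![![![0, 0, 0, 0], ![0, 0, 0, 0], ![0, 0, 0, 0], ![0, 0, 0, 0]], ![![0, 0, 0, 0], ![0, 0, 0, 2], ![0, 0, 0, 0], ![1, 0, 3, 0]], ![![0, 0, 0, 0], ![0, 0, 0, 0], ![0, 0, 0, 0], ![0, 0, 0, 0]], ![![0, 0, 0, 0], ![3, 0, 1, 0], ![0, 0, 0, 0], ![0, 0, 0, 2]]], ![![![0, 0, 0, 2], ![0, 0, 0, 3], ![0, 0, 0, 0], ![0, 0, 0, 1]], ![![0, 0, 0, 1], ![0, 0, 2, 0], ![0, 3, 0, 0], ![0, 0, 0, 0]], ![![0, 0, 0, 0], ![0, 1, 0, 0], ![0, 0, 0, 2], ![0, 3, 0, 0]], ![![0, 0, 0, 3], ![0, 0, 0, 0], ![0, 1, 0, 0], ![0, 0, 2, 0]]]]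

def t4 (a b c d : ZMod 4) : ZMod 4 := tab4 a b c d

def t3 (a b c d : ZMod 3) : ZMod 3 := c*d + b*d + 2*b*c^2*d + a*c

set_option maxHeartbeats 40000000 in
theorem t4_mul : ∀ a b c d e f g h : ZMod 4, a*d-b*c=1 → e*h-f*g=1 →
    t4 (a*e+b*g) (a*f+b*h) (c*e+d*g) (c*f+d*h) = t4 a b c d + t4 e f g h := by decide

set_option maxHeartbeats 4000000 in
theorem t3_mul : ∀ a b c d e f g h : ZMod 3, a*d-b*c=1 → e*h-f*g=1 →
    t3 (a*e+b*g) (a*f+b*h) (c*e+d*g) (c*f+d*h) = t3 a b c d + t3 e f g h := by decide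

def F4 (A : Matrix.SpecialLinearGroup (Fin 2) ℤ) : ZMod 4 :=
  t4 ((A.1 0 0 : ZMod 4)) (A.1 0 1) (A.1 1 0) (A.1 1 1)

def F3 (A : Matrix.SpecialLinearGroup (Fin 2) ℤ) : ZMod 3 :=
  t3 ((A.1 0 0 : ZMod 3)) (A.1 0 1) (A.1 1 0) (A.1 1 1)

lemma F4_mul (A B : Matrix.SpecialLinearGroup (Fin 2) ℤ) : F4 (A*B) = F4 A + F4 B := by
  have hA := A.2; have hB := B.2
  rw [Matrix.det_fin_two] at hA hB
  have hA' : (A.1 0 0 : ZMod 4) * (A.1 1 1 : ZMod 4) - (A.1 0 1 : ZMod 4) * (A.1 1 0 : ZMod 4) = 1 := by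
    have h := congrArg (fun z : ℤ => (z : ZMod 4)) hA
    push_cast at h
    exact_mod_cast h
  have hB' : (B.1 0 0 : ZMod 4) * (B.1 1 1 : ZMod 4) - (B.1 0 1 : ZMod 4) * (B.1 1 0 : ZMod 4) = 1 := by
    have h := congrArg (fun z : ℤ => (z : ZMod 4)) hB
    push_cast at h
    exact_mod_cast h
  have h := t4_mul _ _ _ _ _ _ _ _ hA' hB'
  simp only [F4, Matrix.SpecialLinearGroup.coe_mul, Matrix.mul_apply, Fin.sum_univ_two]
  push_cast
  convert h using 2 <;> push_cast <;> ring

lemma F3_mul (A B : Matrix.SpecialLinearGroup (Fin 2) ℤ) : F3 (A*B) = F3 A + F3 B := by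
  have hA := A.2; have hB := B.2
  rw [Matrix.det_fin_two] at hA hB
  have hA' : (A.1 0 0 : ZMod 3) * (A.1 1 1 : ZMod 3) - (A.1 0 1 : ZMod 3) * (A.1 1 0 : ZMod 3) = 1 := by
    have h := congrArg (fun z : ℤ => (z : ZMod 3)) hA
    push_cast at h
    exact_mod_cast h
  have hB' : (B.1 0 0 : ZMod 3) * (B.1 1 1 : ZMod 3) - (B.1 0 1 : ZMod 3) * (B.1 1 0 : ZMod 3) = 1 := by
    have h := congrArg (fun z : ℤ => (z : ZMod 3)) hB
    push_cast at h
    exact_mod_cast h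
  have h := t3_mul _ _ _ _ _ _ _ _ hA' hB'
  simp only [F3, Matrix.SpecialLinearGroup.coe_mul, Matrix.mul_apply, Fin.sum_univ_two]
  push_cast
  convert h using 2 <;> push_cast <;> ring

lemma key {n : ℕ} [NeZero n] (f : Matrix.SpecialLinearGroup (Fin 2) ℤ → ZMod n)
    (hmul : ∀ a b, f (a*b) = f a + f b) (hS : f S = 1)
    (L : List (Matrix.SpecialLinearGroup (Fin 2) ℤ))
    (hprod : L.prod = 1) (hfac : ∀ g ∈ L, IsConj S g) : n ∣ L.length := by
  have h1 : f 1 = 0 := by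
    have := hmul 1 1; simpa using this.symm
  have hconj : ∀ g ∈ L, f g = 1 := by
    intro g hg
    obtain ⟨c, hc'⟩ := (isConj_iff).mp (hfac g hg)
    have hcc : f (c * c⁻¹) = f c + f c⁻¹ := hmul c c⁻¹
    simp only [mul_inv_cancel, h1] at hcc
    rw [← hc', hmul, hmul, hS]
    linear_combination -hcc
  have hsum : ∀ M : List (Matrix.SpecialLinearGroup (Fin 2) ℤ),
      (∀ g ∈ M, f g = 1) → f M.prod = (M.length : ZMod n) := by
    intro M
    induction M with
    | nil => intro _; simpa using h1
    | cons a l ih =>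
      intro hM
      rw [List.prod_cons, hmul, hM a (by simp), ih (fun g hg => hM g (by simp [hg]))]
      simp only [List.length_cons]
      push_cast
      ring
  have := hsum L hconj
  rw [hprod, h1] at this
  exact (ZMod.natCast_eq_zero_iff _ _).mp this.symm

theorem dehn_twist_factorization_length_div_twelve
    (L : List (Matrix.SpecialLinearGroup (Fin 2) ℤ))
    (hprod : L.prod = 1) (hfac : ∀ g ∈ L, IsConj S g) :
    12 ∣ L.length := by
  have h4 : 4 ∣ L.length := key F4 F4_mul (by decide) L hprod hfac
  have h3 : 3 ∣ L.length := key F3 F3_mul (by decide) L hprod hfac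
  have : (12 : ℕ) = 3 * 4 := by norm_num
  rw [this]
  exact Nat.Coprime.mul_dvd_of_dvd_of_dvd (by norm_num) h3 h4
end
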